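/- The language { aⁿ # aᵐ # a^{n·m} | n, m ∈ ℕ } is accepted by a (non-deterministic, non-bounded-visit) two-way Parikh automaton of dimension 2 with semi-linear constraint {(0,0)}. -/

import Mathlib

/-- Two-way finite automaton; `Sum.inr false` is the left delimiter ⊢,
`Sum.inr true` is the right delimiter ⊣. -/
structure TwoWayFA (σ : Type) (Q : Type) where
  /-- reading direction of each state: `true` = right-reading -/
  isRight : Q → Bool
  init : Set Q
  acc : Set Q
  trans : Q → (σ ⊕ Bool) → Q → Prop

namespace TwoWayFA

variable {σ Q : Type}

/-- The letter of ⊢w⊣ at index `i` (0-based). -/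
def readAt (w : List σ) (i : ℕ) : Option (σ ⊕ Bool) :=
  if i = 0 then some (Sum.inr false)
  else if i = w.length + 1 then some (Sum.inr true)
  else (w[i - 1]?).map Sum.inl

/-- Index of the letter read from configuration `c = (state, head position)`,
where the head position counts the letters of ⊢w⊣ to the left of the head. -/
def readIdx (A : TwoWayFA σ Q) (c : Q × ℕ) : ℕ :=
  if A.isRight c.1 then c.2 else c.2 - 1

def step (A : TwoWayFA σ Q) (w : List σ) (c c' : Q × ℕ) : Prop :=
  ∃ a, readAt w (A.readIdx c) = some a ∧ A.trans c.1 a c'.1 ∧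
    (if A.isRight c.1 then c'.2 = c.2 + 1 else c.2 ≠ 0 ∧ c'.2 = c.2 - 1)

def IsRun (A : TwoWayFA σ Q) (w : List σ) (ρ : List (Q × ℕ)) : Prop :=
  ρ ≠ [] ∧ ρ.Chain' (A.step w)

/-- An accepting run starts at the left end of ⊢w⊣ in an initial state and
halts past the right delimiter in an accepting state. -/
def IsAccRun (A : TwoWayFA σ Q) (w : List σ) (ρ : List (Q × ℕ)) : Prop :=
  A.IsRun w ρ ∧ (∃ q ∈ A.init, ρ.head? = some (q, 0)) ∧
    (∃ q ∈ A.acc, ρ.getLast? = some (q, w.length + 2))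

def lang (A : TwoWayFA σ Q) : Set (List σ) := {w | ∃ ρ, A.IsAccRun w ρ}

def Deterministic (A : TwoWayFA σ Q) : Prop :=
  A.init.Subsingleton ∧ ∀ q a q₁ q₂, A.trans q a q₁ → A.trans q a q₂ → q₁ = q₂

def OneWay (A : TwoWayFA σ Q) : Prop := ∀ q, A.isRight q = true

def Unambiguous (A : TwoWayFA σ Q) : Prop :=
  ∀ w ρ₁ ρ₂, A.IsAccRun w ρ₁ → A.IsAccRun w ρ₂ → ρ₁ = ρ₂

end TwoWayFA

/-- Number of visits of run `ρ` to input position `p`. -/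
def visits {Q : Type} (ρ : List (Q × ℕ)) (p : ℕ) : ℕ :=
  (ρ.filter fun c => c.2 == p).length

/-- A run is `k`-visit if it visits every input position at most `k` times. -/
def KVisit {Q : Type} (k : ℕ) (ρ : List (Q × ℕ)) : Prop := ∀ p, visits ρ p ≤ k

/-- `A` is `k`-visit: every accepting run visits each position at most `k` times. -/
def TwoWayFA.IsKVisit {σ Q : Type} (A : TwoWayFA σ Q) (k : ℕ) : Prop :=
  ∀ w ρ, A.IsAccRun w ρ → KVisit k ρ

/-- Weight of a step (a pair of consecutive configurations) of a Parikh automaton. -/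
def stepWeight {σ Q : Type} (A : TwoWayFA σ Q) {d : ℕ}
    (lam : Q → (σ ⊕ Bool) → Q → (Fin d → ℤ)) (w : List σ)
    (cc : (Q × ℕ) × (Q × ℕ)) : Fin d → ℤ :=
  match TwoWayFA.readAt w (A.readIdx cc.1) with
  | some a => lam cc.1.1 a cc.2.1
  | none => 0

/-- Value of a run of a Parikh automaton: the sum of the weight vectors of its steps. -/
def runVal {σ Q : Type} (A : TwoWayFA σ Q) {d : ℕ}
    (lam : Q → (σ ⊕ Bool) → Q → (Fin d → ℤ)) (w : List σ) (ρ : List (Q × ℕ)) :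
    Fin d → ℤ :=
  ((ρ.zip ρ.tail).map (stepWeight A lam w)).sum

/-- Language of a two-way Parikh automaton `(A, lam, S)` with semi-linear constraint `S`. -/
def paLang {σ Q : Type} (A : TwoWayFA σ Q) {d : ℕ}
    (lam : Q → (σ ⊕ Bool) → Q → (Fin d → ℤ)) (S : Set (Fin d → ℤ)) : Set (List σ) :=
  {w | ∃ ρ, A.IsAccRun w ρ ∧ runVal A lam w ρ ∈ S}

/-- The alphabet {a, #}. -/
inductive AHash : Type
  | a | hash
deriving DecidableEq
section Mult2PA

open TwoWayFA Sum

/-- States of our 2PA. -/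
inductive St : Type
  | s | r | l | z | t | u | f
deriving DecidableEq

instance : Fintype St :=
  ⟨{.s, .r, .l, .z, .t, .u, .f}, by intro x; cases x <;> simp⟩

/-- The two-way automaton. -/
def tA : TwoWayFA AHash St where
  isRight q := match q with | .l => false | _ => true
  init := {St.s}
  acc := {St.f}
  trans q x q' :=
    match q, x, q' with
    | .s, .inr false, .r => True
    | .s, .inr false, .z => True
    | .r, .inl .a, .r => True
    | .r, .inl .hash, .l => True
    | .r, .inl .hash, .t => True
    | .l, .inl .a, .l => True
    | .l, .inl .hash, .l => True
    | .l, .inr false, .s => True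
    | .z, .inl .a, .z => True
    | .z, .inl .hash, .t => True
    | .t, .inl .a, .t => True
    | .t, .inl .hash, .u => True
    | .u, .inl .a, .u => True
    | .u, .inr true, .f => True
    | _, _, _ => False

/-- The weights. -/
def tL : St → (AHash ⊕ Bool) → St → (Fin 2 → ℤ) :=
  fun q x q' => match q, x, q' with
  | .s, .inr false, .r => ![0, 1]
  | .r, .inl .a, .r => ![1, 0]
  | .t, .inl .a, .t => ![0, -1]
  | .u, .inl .a, .u => ![(-1), 0]
  | _, _, _ => 0

variable {σ : Type}

lemma readAt_zero (w : List σ) : readAt w 0 = some (inr false) := by simp [readAt]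

lemma readAt_endR (w : List σ) : readAt w (w.length + 1) = some (inr true) := by
  simp [readAt]

lemma readAt_mid (w : List σ) {x : ℕ} (h1 : 1 ≤ x) (h2 : x ≤ w.length) :
    readAt w x = (w[x - 1]?).map inl := by
  unfold readAt
  rw [if_neg (by omega), if_neg (by omega)]

lemma readAt_big (w : List σ) {x : ℕ} (h : w.length + 1 < x) : readAt w x = none := by
  unfold readAt
  rw [if_neg (by omega), if_neg (by omega)]
  rw [List.getElem?_eq_none (by omega)]
  rfl

lemma readAt_cases (w : List σ) (x : ℕ) :
    x = 0 ∨ x = w.length + 1 ∨ (1 ≤ x ∧ x ≤ w.length ∧ ∃ c, readAt w x = some (inl c))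
      ∨ (w.length + 1 < x ∧ readAt w x = none) := by
  rcases Nat.eq_zero_or_pos x with rfl | hx
  · exact Or.inl rfl
  rcases Nat.lt_or_ge w.length x with hgt | hle
  · rcases Nat.eq_or_lt_of_le (Nat.succ_le_of_lt hgt) with he | hlt
    · exact Or.inr (Or.inl he.symm)
    · exact Or.inr (Or.inr (Or.inr ⟨hlt, readAt_big w hlt⟩))
  · refine Or.inr (Or.inr (Or.inl ⟨hx, hle, ?_⟩))
    rw [readAt_mid w hx hle]
    rcases List.getElem?_eq_getElem (l := w) (i := x - 1) (by omega) with h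
    rw [h]; exact ⟨_, rfl⟩

lemma readAt_eq_inr_false {w : List σ} {x : ℕ} :
    readAt w x = some (inr false) ↔ x = 0 := by
  constructor
  · intro h
    rcases readAt_cases w x with rfl | rfl | ⟨_, _, c, hc⟩ | ⟨_, hn⟩
    · rfl
    · rw [readAt_endR] at h; simp at h
    · rw [hc] at h; simp at h
    · rw [hn] at h; simp at h
  · rintro rfl; exact readAt_zero w

lemma readAt_eq_inr_true {w : List σ} {x : ℕ} :
    readAt w x = some (inr true) ↔ x = w.length + 1 := by
  constructor
  · intro h
    rcases readAt_cases w x with rfl | rfl | ⟨_, _, c, hc⟩ | ⟨_, hn⟩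
    · rw [readAt_zero] at h; simp at h
    · rfl
    · rw [hc] at h; simp at h
    · rw [hn] at h; simp at h
  · rintro rfl; exact readAt_endR w

lemma readAt_inl_bounds {w : List σ} {x : ℕ} {c : σ}
    (h : readAt w x = some (inl c)) : 1 ≤ x ∧ x ≤ w.length := by
  rcases readAt_cases w x with rfl | rfl | ⟨h1, h2, _⟩ | ⟨_, hn⟩
  · rw [readAt_zero] at h; simp at h
  · rw [readAt_endR] at h; simp at h
  · exact ⟨h1, h2⟩
  · rw [hn] at h; simp at h

lemma readAt_inl_get {w : List σ} {x : ℕ} {c : σ}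
    (h : readAt w x = some (inl c)) : w[x - 1]? = some c := by
  obtain ⟨h1, h2⟩ := readAt_inl_bounds h
  rw [readAt_mid w h1 h2] at h
  cases hg : w[x - 1]? <;> rw [hg] at h <;> simp_all

/-- Words with the same `readAt` function are equal. -/
lemma readAt_ext {w₁ w₂ : List σ} (h : ∀ x, readAt w₁ x = readAt w₂ x) : w₁ = w₂ := by
  have hlen : w₁.length = w₂.length := by
    have := h (w₁.length + 1)
    rw [readAt_endR] at this
    have := (readAt_eq_inr_true.1 this.symm)
    omega
  apply List.ext_getElem?
  intro i
  rcases Nat.lt_or_ge i w₁.length with hi | hi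
  · have := h (i + 1)
    rw [readAt_mid w₁ (by omega) (by omega), readAt_mid w₂ (by omega) (by omega)] at this
    simp only [Nat.add_sub_cancel] at this
    exact Option.map_injective Sum.inl_injective this
  · rw [List.getElem?_eq_none (by omega), List.getElem?_eq_none (by omega)]

/-! ### The target word -/

def tgt (n m k : ℕ) : List AHash :=
  List.replicate n .a ++ .hash :: (List.replicate m .a ++ .hash :: List.replicate k .a)

lemma tgt_length (n m k : ℕ) : (tgt n m k).length = n + m + k + 2 := by
  simp [tgt]; omega

lemma rep_get? (n i : ℕ) (c : AHash) :
    (List.replicate n c)[i]? = if i < n then some c else none := by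
  split
  · rw [List.getElem?_eq_getElem (by simpa using ‹i < n›)]; simp
  · exact List.getElem?_eq_none (by simpa using Nat.le_of_not_lt ‹¬ i < n›)

lemma hashcons_get? (l : List AHash) (j : ℕ) :
    (AHash.hash :: l)[j]? = if j = 0 then some .hash else l[j - 1]? := by
  rcases j with _ | j <;> simp

lemma tgt_get? (n m k i : ℕ) :
    (tgt n m k)[i]? =
      if i < n then some .a else if i = n then some .hash
      else if i < n + m + 1 then some .a else if i = n + m + 1 then some .hash
      else if i < n + m + k + 2 then some .a else none := by
  unfold tgt
  rcases Nat.lt_or_ge i n with h | h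
  · rw [List.getElem?_append_left (by simpa using h), rep_get?]
    split_ifs <;> first | rfl | omega
  · rw [List.getElem?_append_right (by simpa using h), List.length_replicate, hashcons_get?]
    rcases Nat.lt_or_ge (i - n - 1) m with h3 | h3
    · rw [List.getElem?_append_left (by simpa using h3), rep_get?]
      split_ifs <;> first | rfl | omega
    · rw [List.getElem?_append_right (by simpa using h3), List.length_replicate,
        hashcons_get?, rep_get?]
      split_ifs <;> first | rfl | omega
/-! ### readAt for the target word -/

section ReadTgt
variable (n m k : ℕ)

lemma readAt_tgt_a {x : ℕ} (h : 1 ≤ x)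
    (hx : x ≤ n ∨ (n + 2 ≤ x ∧ x ≤ n + m + 1) ∨ (n + m + 3 ≤ x ∧ x ≤ n + m + k + 2)) :
    readAt (tgt n m k) x = some (inl .a) := by
  rw [readAt_mid _ h (by rw [tgt_length]; omega), tgt_get?]
  rcases hx with h1 | h1 | h1 <;>
    [skip; skip; skip] <;> split_ifs <;> first | rfl | omega

lemma readAt_tgt_h1 : readAt (tgt n m k) (n + 1) = some (inl .hash) := by
  rw [readAt_mid _ (by omega) (by rw [tgt_length]; omega), tgt_get?]
  split_ifs <;> first | rfl | omega

lemma readAt_tgt_h2 : readAt (tgt n m k) (n + m + 2) = some (inl .hash) := by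
  rw [readAt_mid _ (by omega) (by rw [tgt_length]; omega), tgt_get?]
  split_ifs <;> first | rfl | omega

end ReadTgt

/-! ### runVal machinery -/

lemma zip_tail_append {α : Type} (l1 l2 : List α) (h1 : l1 ≠ []) (h2 : l2 ≠ []) :
    (l1 ++ l2).zip (l1 ++ l2).tail =
      l1.zip l1.tail ++ (l1.getLast h1, l2.head h2) :: l2.zip l2.tail := by
  induction l1 with
  | nil => exact absurd rfl h1
  | cons a t ih =>
    cases t with
    | nil =>
      cases l2 with
      | nil => exact absurd rfl h2
      | cons b t2 => simp
    | cons b t =>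
      have := ih (by simp)
      simp only [List.cons_append, List.tail_cons, List.zip_cons_cons] at *
      rw [this]
      simp [List.getLast]

lemma runVal_append {Q : Type} (A : TwoWayFA AHash Q) (lam : Q → (AHash ⊕ Bool) → Q → (Fin 2 → ℤ))
    (w : List AHash) (l1 l2 : List (Q × ℕ)) (h1 : l1 ≠ []) (h2 : l2 ≠ []) :
    runVal A lam w (l1 ++ l2) =
      runVal A lam w l1 + stepWeight A lam w (l1.getLast h1, l2.head h2) + runVal A lam w l2 := by
  unfold runVal
  rw [zip_tail_append l1 l2 h1 h2]
  rw [List.map_append, List.sum_append, List.map_cons, List.sum_cons]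
  abel

/-! ### Chain-with-value predicate -/

def CV (w : List AHash) (l : List (St × ℕ)) (hd en : St × ℕ) (v : Fin 2 → ℤ) : Prop :=
  l.Chain' (tA.step w) ∧ l.head? = some hd ∧ l.getLast? = some en ∧ runVal tA tL w l = v

lemma CV.single (w : List AHash) (c : St × ℕ) : CV w [c] c c 0 := by
  refine ⟨List.isChain_singleton c, rfl, rfl, ?_⟩
  simp [runVal]

lemma CV.ne_nil {w l hd en v} (h : CV w l hd en v) : l ≠ [] := by
  rintro rfl; exact (by simpa using h.2.1)

lemma CV.glue {w l1 l2 c1 d1 c2 d2 v1 v2 v}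
    (h1 : CV w l1 c1 d1 v1) (h2 : CV w l2 c2 d2 v2)
    (hs : tA.step w d1 c2)
    (hv : v1 + stepWeight tA tL w (d1, c2) + v2 = v) :
    CV w (l1 ++ l2) c1 d2 v := by
  have n1 := h1.ne_nil
  have n2 := h2.ne_nil
  have hL1 : l1.getLast n1 = d1 := by
    have := h1.2.2.1
    rw [List.getLast?_eq_getLast n1] at this
    exact Option.some_injective _ this
  have hH2 : l2.head n2 = c2 := by
    have := h2.2.1
    rw [List.head?_eq_head n2] at this
    exact Option.some_injective _ this
  refine ⟨?_, ?_, ?_, ?_⟩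
  · refine List.isChain_append.2 ⟨h1.1, h2.1, ?_⟩
    intro x hx y hy
    rw [h1.2.2.1] at hx
    rw [h2.2.1] at hy
    cases hx; cases hy
    exact hs
  · cases l1 with
    | nil => exact absurd rfl n1
    | cons a t => simpa using h1.2.1
  · rw [List.getLast?_append_of_ne_nil l1 n2]
    exact h2.2.2.1
  · rw [runVal_append tA tL w l1 l2 n1 n2, hL1, hH2, h1.2.2.2, h2.2.2.2, hv]

lemma stepWeight_eq {w : List AHash} {c c' : St × ℕ} {x : AHash ⊕ Bool}
    (h : readAt w (tA.readIdx c) = some x) :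
    stepWeight tA tL w (c, c') = tL c.1 x c'.1 := by
  unfold stepWeight
  rw [h]
/-! ### Step constructors -/

lemma mk_step_right {w : List AHash} {q q' : St} {i : ℕ} {x}
    (hq : tA.isRight q = true) (hr : readAt w i = some x) (ht : tA.trans q x q') :
    tA.step w (q, i) (q', i + 1) := by
  refine ⟨x, ?_, ht, ?_⟩ <;> simp [TwoWayFA.readIdx, hq, hr]

lemma mk_step_left {w : List AHash} {q q' : St} {i : ℕ} {x}
    (hq : tA.isRight q = false) (hi : i ≠ 0)
    (hr : readAt w (i - 1) = some x) (ht : tA.trans q x q') :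
    tA.step w (q, i) (q', i - 1) := by
  refine ⟨x, ?_, ht, ?_⟩ <;> simp [TwoWayFA.readIdx, hq, hr, hi]

lemma stepWeight_right {w : List AHash} {q : St} {i : ℕ} {x} {c' : St × ℕ}
    (hq : tA.isRight q = true) (hr : readAt w i = some x) :
    stepWeight tA tL w ((q, i), c') = tL q x c'.1 := by
  unfold stepWeight TwoWayFA.readIdx
  simp only [hq, if_true]
  rw [hr]

lemma stepWeight_left {w : List AHash} {i : ℕ} {x} {c' : St × ℕ}
    (hr : readAt w (i - 1) = some x) :
    stepWeight tA tL w ((St.l, i), c') = tL St.l x c'.1 := by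
  unfold stepWeight
  have h : tA.readIdx (St.l, i) = i - 1 := rfl
  rw [h, hr]

lemma CV.cast {w : List AHash} {l hd en en' v v'} (h : CV w l hd en v)
    (he : en = en') (hv : v = v') : CV w l hd en' v' := he ▸ hv ▸ h

/-! ### Segments -/

lemma upSeg {w : List AHash} (q : St) (hq : tA.isRight q = true)
    (htr : tA.trans q (inl AHash.a) q) :
    ∀ (c i : ℕ), (∀ x, i ≤ x → x < i + c → readAt w x = some (inl AHash.a)) →
    CV w ((List.range' i (c+1)).map (fun p => (q, p))) (q, i) (q, i + c)
      ((c : ℤ) • tL q (inl AHash.a) q) := by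
  intro c
  induction c with
  | zero =>
    intro i _
    simpa using CV.single w (q, i)
  | succ c ih =>
    intro i ha
    have hstep : tA.step w (q, i) (q, i + 1) :=
      mk_step_right hq (ha i le_rfl (by omega)) htr
    have h2 := ih (i + 1) (fun x hx1 hx2 => ha x (by omega) (by omega))
    have h := (CV.single w (q, i)).glue h2 hstep rfl
    rw [List.range'_succ, List.map_cons]
    have hl : ((q, i) :: (List.range' (i+1) (c+1)).map (fun p => (q, p)))
        = [(q, i)] ++ (List.range' (i+1) (c+1)).map (fun p => (q, p)) := rfl
    rw [hl]
    refine h.cast (by rw [show i + 1 + c = i + (c+1) by omega]) ?_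
    rw [stepWeight_right hq (ha i le_rfl (by omega))]
    push_cast
    rw [add_smul, one_smul]
    abel

/-- Descending run segment for the left-reading state. -/
def desc : ℕ → ℕ → List (St × ℕ)
  | _, 0 => []
  | top, (c+1) => (St.l, top) :: desc (top - 1) c

lemma downSeg {w : List AHash} :
    ∀ (c b : ℕ), 1 ≤ b → (∀ x, b ≤ x → x < b + c → readAt w x = some (inl AHash.a)) →
    CV w (desc (b + c) (c+1)) (St.l, b + c) (St.l, b) 0 := by
  intro c
  induction c with
  | zero => intro b _ _; simpa [desc] using CV.single w (St.l, b)
  | succ c ih =>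
    intro b hb ha
    have hra : readAt w (b + c + 1 - 1) = some (inl AHash.a) := by
      simpa using ha (b + c) (by omega) (by omega)
    have hstep : tA.step w (St.l, b + c + 1) (St.l, b + c) := by
      have := mk_step_left (w := w) (q := St.l) (q' := St.l) (i := b + c + 1)
        (x := inl AHash.a) rfl (by omega) hra trivial
      simpa using this
    have h2 := ih b hb (fun x h1 h2 => ha x h1 (by omega))
    have h := (CV.single w (St.l, b + c + 1)).glue h2 hstep rfl
    have hd : desc (b + (c+1)) (c + 2) = [(St.l, b + c + 1)] ++ desc (b + c) (c + 1) := by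
      show desc (b + (c+1)) (c+2) = (St.l, b + c + 1) :: desc (b + c) (c+1)
      rw [show b + (c + 1) = b + c + 1 by omega, desc]
      congr 1 <;> omega
    rw [show b + (c+1) = b + c + 1 by omega] at hd ⊢
    rw [hd]
    refine h.cast rfl ?_
    rw [stepWeight_left hra]
    simp [tL]
/-! ### The accepting run for `tgt n m (n*m)` -/

def passL (n : ℕ) : List (St × ℕ) :=
  ([(St.s, 0)] ++ (List.range' 1 (n+1)).map (fun p => (St.r, p))) ++
    ([(St.l, n+2)] ++ desc (1+n) (n+1))

def tailL (n m k : ℕ) : List (St × ℕ) :=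
  ((([(St.s, 0)] ++ (List.range' 1 (n+1)).map (fun p => (St.z, p))) ++
    (List.range' (n+2) (m+1)).map (fun p => (St.t, p))) ++
    (List.range' (n+m+3) (k+1)).map (fun p => (St.u, p))) ++
    [(St.f, n+m+k+4)]

def runL (n m k : ℕ) : ℕ → List (St × ℕ)
  | 0 => tailL n m k
  | (p+1) => passL n ++ runL n m k p

section Fwd
variable (n m k : ℕ)

lemma ha1 : ∀ x, 1 ≤ x → x < 1 + n → readAt (tgt n m k) x = some (inl AHash.a) :=
  fun _ hx1 hx2 => readAt_tgt_a n m k hx1 (Or.inl (by omega))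

lemma hh1 : readAt (tgt n m k) (n + 1) = some (inl AHash.hash) := readAt_tgt_h1 n m k

lemma hh1' : readAt (tgt n m k) (1 + n) = some (inl AHash.hash) := by
  rw [Nat.add_comm]; exact readAt_tgt_h1 n m k

lemma pass_cv : CV (tgt n m k) (passL n) (St.s, 0) (St.l, 1) ![(n:ℤ), 1] := by
  have hA := (CV.single (tgt n m k) (St.s, 0)).glue
    (upSeg St.r rfl trivial n 1 (ha1 n m k))
    (mk_step_right rfl (readAt_zero _) trivial) rfl
  have hB := (CV.single (tgt n m k) (St.l, n+2)).glue
    (downSeg (n) 1 (le_refl 1) (ha1 n m k))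
    (by
      have := mk_step_left (w := tgt n m k) (q := St.l) (q' := St.l) (i := n + 2)
        (x := inl AHash.hash) rfl (by omega) (hh1 n m k) trivial
      simpa [show n + 2 - 1 = 1 + n by omega] using this) rfl
  have hstep2 : tA.step (tgt n m k) (St.r, 1 + n) (St.l, n + 2) := by
    have := mk_step_right (w := tgt n m k) (q := St.r) (q' := St.l)
      (x := inl AHash.hash) rfl (hh1' n m k) trivial
    simpa [show 1 + n + 1 = n + 2 by omega] using this
  have h := hA.glue hB hstep2 rfl
  refine h.cast rfl ?_
  rw [stepWeight_right (q := St.s) (i := 0) (c' := (St.r, 1)) rfl (readAt_zero _),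
    stepWeight_right (q := St.r) (i := 1+n) (c' := (St.l, n+2)) rfl (hh1' n m k),
    stepWeight_left (i := n+2) (c' := (St.l, 1+n)) (hh1 n m k)]
  funext i
  fin_cases i <;> simp [tL] <;> ring

lemma ha2 : ∀ x, n + 2 ≤ x → x < n + 2 + m → readAt (tgt n m k) x = some (inl AHash.a) :=
  fun _ hx1 hx2 => readAt_tgt_a n m k (by omega) (Or.inr (Or.inl ⟨by omega, by omega⟩))

lemma ha3 : ∀ x, n + m + 3 ≤ x → x < n + m + 3 + k → readAt (tgt n m k) x = some (inl AHash.a) :=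
  fun _ hx1 hx2 => readAt_tgt_a n m k (by omega) (Or.inr (Or.inr ⟨by omega, by omega⟩))

lemma hh2 : readAt (tgt n m k) (n + 2 + m) = some (inl AHash.hash) := by
  rw [show n + 2 + m = n + m + 2 by omega]; exact readAt_tgt_h2 n m k

lemma hend : readAt (tgt n m k) (n + m + 3 + k) = some (inr true) := by
  rw [show n + m + 3 + k = (tgt n m k).length + 1 by rw [tgt_length]; omega]
  exact readAt_endR _

lemma tail_cv : CV (tgt n m k) (tailL n m k) (St.s, 0) (St.f, n+m+k+4) ![-(k:ℤ), -(m:ℤ)] := by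
  have hA := (CV.single (tgt n m k) (St.s, 0)).glue
    (upSeg St.z rfl trivial n 1 (ha1 n m k))
    (mk_step_right rfl (readAt_zero _) trivial) rfl
  have hB := hA.glue (upSeg St.t rfl trivial m (n+2) (ha2 n m k))
    (by
      have := mk_step_right (w := tgt n m k) (q := St.z) (q' := St.t)
        (x := inl AHash.hash) rfl (hh1' n m k) trivial
      simpa [show 1 + n + 1 = n + 2 by omega] using this) rfl
  have hC := hB.glue (upSeg St.u rfl trivial k (n+m+3) (ha3 n m k))
    (by
      have := mk_step_right (w := tgt n m k) (q := St.t) (q' := St.u)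
        (x := inl AHash.hash) rfl (hh2 n m k) trivial
      simpa [show n + 2 + m + 1 = n + m + 3 by omega] using this) rfl
  have hD := hC.glue (CV.single (tgt n m k) (St.f, n+m+k+4))
    (by
      have := mk_step_right (w := tgt n m k) (q := St.u) (q' := St.f)
        (x := inr true) rfl (hend n m k) trivial
      simpa [show n + m + 3 + k + 1 = n+m+k+4 by omega] using this) rfl
  refine hD.cast rfl ?_
  rw [stepWeight_right (q := St.s) (i := 0) (c' := (St.z, 1)) rfl (readAt_zero _),
    stepWeight_right (q := St.z) (i := 1+n) (c' := (St.t, n+2)) rfl (hh1' n m k),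
    stepWeight_right (q := St.t) (i := n+2+m) (c' := (St.u, n+m+3)) rfl (hh2 n m k),
    stepWeight_right (q := St.u) (i := n+m+3+k) (c' := (St.f, n+m+k+4)) rfl (hend n m k)]
  funext i
  fin_cases i <;> simp [tL] <;> ring

lemma run_cv : ∀ p, CV (tgt n m k) (runL n m k p) (St.s, 0) (St.f, n+m+k+4)
    ![(p:ℤ) * n - k, (p:ℤ) - m] := by
  intro p
  induction p with
  | zero =>
    refine (tail_cv n m k).cast rfl ?_
    funext i; fin_cases i <;> simp
  | succ p ih =>
    have hstep : tA.step (tgt n m k) (St.l, 1) (St.s, 0) :=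
      mk_step_left (x := inr false) rfl one_ne_zero (readAt_zero _) trivial
    refine ((pass_cv n m k).glue ih hstep rfl).cast rfl ?_
    rw [stepWeight_left (i := 1) (c' := (St.s, 0)) (readAt_zero _)]
    funext i
    fin_cases i <;> simp [tL] <;> push_cast <;> ring

end Fwd

lemma forward (n m : ℕ) :
    tgt n m (n*m) ∈ paLang tA tL {v | v = 0} := by
  refine ⟨runL n m (n*m) m, ⟨⟨?_, ?_⟩, ?_, ?_⟩, ?_⟩
  · exact (run_cv n m (n*m) m).ne_nil
  · exact (run_cv n m (n*m) m).1
  · exact ⟨St.s, rfl, (run_cv n m (n*m) m).2.1⟩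
  · refine ⟨St.f, rfl, ?_⟩
    rw [(run_cv n m (n*m) m).2.2.1, tgt_length]
  · show runVal tA tL _ _ = 0
    rw [(run_cv n m (n*m) m).2.2.2]
    funext i
    fin_cases i <;> simp <;> push_cast <;> ring
/-! ### Backward analysis: invariants -/

def Ablk (w : List AHash) (i j : ℕ) : Prop :=
  ∀ x, i ≤ x → x ≤ j → readAt w x = some (inl AHash.a)

def Hat (w : List AHash) (i : ℕ) : Prop := readAt w i = some (inl AHash.hash)

lemma Ablk_vac {w : List AHash} {i j : ℕ} (h : j < i) : Ablk w i j :=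
  fun _ h1 h2 => ((by omega : False)).elim

lemma Ablk_ext {w : List AHash} {i j : ℕ} (ha : readAt w i = some (inl AHash.a))
    (h : Ablk w (i+1) j) : Ablk w i j := by
  intro x h1 h2
  rcases Nat.eq_or_lt_of_le h1 with rfl | h3
  · exact ha
  · exact h x h3 h2

def Iu (w : List AHash) (j : ℕ) (v : Fin 2 → ℤ) : Prop :=
  1 ≤ j ∧ j ≤ w.length + 1 ∧ Ablk w j w.length ∧ v = ![(j:ℤ) - (w.length + 1), 0]

def It (w : List AHash) (j : ℕ) (v : Fin 2 → ℤ) : Prop :=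
  ∃ h : ℕ, j ≤ h ∧ Hat w h ∧ Ablk w j (h-1) ∧ Ablk w (h+1) w.length ∧
    v = ![(h:ℤ) - w.length, (j:ℤ) - h]

def Iz (w : List AHash) (j : ℕ) (v : Fin 2 → ℤ) : Prop :=
  ∃ g : ℕ, j ≤ g ∧ Ablk w j (g-1) ∧ Hat w g ∧ It w (g+1) v

def Is (w : List AHash) (v : Fin 2 → ℤ) : Prop :=
  ∃ g h p : ℕ, g < h ∧ Hat w g ∧ Hat w h ∧ Ablk w 1 (g-1) ∧ Ablk w (g+1) (h-1) ∧
    Ablk w (h+1) w.length ∧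
    v = ![(p:ℤ) * ((g:ℤ) - 1) - ((w.length:ℤ) - h), (p:ℤ) - ((h:ℤ) - g - 1)]

def Ir (w : List AHash) (j : ℕ) (v : Fin 2 → ℤ) : Prop :=
  1 ≤ j ∧ ∃ g : ℕ, j ≤ g ∧ Ablk w j (g-1) ∧ Hat w g ∧
    ∃ v', v = ![(g:ℤ) - j, 0] + v' ∧ (It w (g+1) v' ∨ Is w v')

def SInv (w : List AHash) : St × ℕ → (Fin 2 → ℤ) → Prop
  | (.f, j), v => j = w.length + 2 ∧ v = 0
  | (.u, j), v => Iu w j v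
  | (.t, j), v => It w j v
  | (.z, j), v => Iz w j v
  | (.r, j), v => Ir w j v
  | (.l, _), v => Is w v
  | (.s, j), v => j = 0 ∧ Is w v

lemma hash_unique {w : List AHash} {g g' : ℕ} (h1 : Hat w g) (a1 : Ablk w 1 (g-1))
    (h2 : Hat w g') (a2 : Ablk w 1 (g'-1)) : g = g' := by
  have hb1 := readAt_inl_bounds h1
  have hb2 := readAt_inl_bounds h2
  rcases Nat.lt_trichotomy g g' with hlt | heq | hlt
  · have := a2 g hb1.1 (by omega)
    have hx : some ((inl AHash.a : AHash ⊕ Bool)) = some (inl AHash.hash) := by rw [← this]; exact h1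
    simp at hx
  · exact heq
  · have := a1 g' hb2.1 (by omega)
    have hx : some ((inl AHash.a : AHash ⊕ Bool)) = some (inl AHash.hash) := by rw [← this]; exact h2
    simp at hx
lemma inv_step {w : List AHash} {c c' : St × ℕ} {v' : Fin 2 → ℤ}
    (hs : tA.step w c c') (hi : SInv w c' v') :
    SInv w c (stepWeight tA tL w (c, c') + v') := by
  obtain ⟨x, hr, ht, hp⟩ := hs
  obtain ⟨q, i⟩ := c
  obtain ⟨q', i'⟩ := c'
  have hw : stepWeight tA tL w ((q,i),(q',i')) = tL q x q' := by
    unfold stepWeight; rw [hr]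
  rw [hw]
  cases q with
  | s =>
    have hp' : i' = i + 1 := by simpa [tA] using hp
    have hr' : readAt w i = some x := hr
    subst hp'
    rcases x with xc | xb
    · cases xc <;> cases q' <;> exact ht.elim
    · cases xb
      · have hi0 : i = 0 := readAt_eq_inr_false.1 hr'
        subst hi0
        cases q' <;> try exact ht.elim
        · -- s ⊢ r
          obtain ⟨-, g, hg, hA1, hHg, v'', hveq, hcase⟩ := hi
          refine ⟨rfl, ?_⟩
          rcases hcase with hIt | hIs
          · obtain ⟨h, hgh, hHh, hA2, hA3, hv2⟩ := hIt
            refine ⟨g, h, 1, by omega, hHg, hHh, hA1, hA2, hA3, ?_⟩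
            rw [hveq, hv2]
            funext idx; fin_cases idx <;> simp [tL, Matrix.vecHead, Matrix.vecTail] <;> push_cast <;> ring
          · obtain ⟨g', h', p, hgh', hHg', hHh', hA1', hA2', hA3', hv2⟩ := hIs
            have hgg : g = g' := hash_unique hHg hA1 hHg' hA1'
            subst hgg
            refine ⟨g, h', p+1, hgh', hHg, hHh', hA1, hA2', hA3', ?_⟩
            rw [hveq, hv2]
            funext idx; fin_cases idx <;> simp [tL, Matrix.vecHead, Matrix.vecTail] <;> push_cast <;> ring
        · -- s ⊢ z
          obtain ⟨g, hg, hA1, hHg, h, hgh, hHh, hA2, hA3, hv2⟩ := hi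
          refine ⟨rfl, g, h, 0, by omega, hHg, hHh, hA1, hA2, hA3, ?_⟩
          rw [hv2]
          funext idx; fin_cases idx <;> simp [tL, Matrix.vecHead, Matrix.vecTail] <;> push_cast <;> ring
      · cases q' <;> exact ht.elim
  | r =>
    have hp' : i' = i + 1 := by simpa [tA] using hp
    have hr' : readAt w i = some x := hr
    subst hp'
    rcases x with xc | xb
    · have hib := readAt_inl_bounds hr'
      cases xc
      · cases q' <;> try exact ht.elim
        · -- r a r
          obtain ⟨-, g, hg, hA, hHg, v'', hveq, hcase⟩ := hi
          refine ⟨hib.1, g, by omega, Ablk_ext hr' hA, hHg, v'', ?_, hcase⟩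
          rw [hveq]
          funext idx; fin_cases idx <;> simp [tL, Matrix.vecHead, Matrix.vecTail] <;> push_cast <;> ring
      · cases q' <;> try exact ht.elim
        · -- r # l
          refine ⟨hib.1, i, le_rfl, Ablk_vac (by omega), hr', v', ?_, Or.inr hi⟩
          funext idx; fin_cases idx <;> simp [tL, Matrix.vecHead, Matrix.vecTail]
        · -- r # t
          refine ⟨hib.1, i, le_rfl, Ablk_vac (by omega), hr', v', ?_, Or.inl hi⟩
          funext idx; fin_cases idx <;> simp [tL, Matrix.vecHead, Matrix.vecTail]
    · cases xb <;> cases q' <;> exact ht.elim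
  | l =>
    have hp' : i ≠ 0 ∧ i' = i - 1 := by simpa [tA] using hp
    have hr' : readAt w (i - 1) = some x := hr
    obtain ⟨hne, hieq⟩ := hp'
    subst hieq
    rcases x with xc | xb
    · cases xc
      · cases q' <;> try exact ht.elim
        · -- l a l
          rw [show tL St.l (inl AHash.a) St.l = 0 from rfl, zero_add]
          exact hi
      · cases q' <;> try exact ht.elim
        · -- l # l
          rw [show tL St.l (inl AHash.hash) St.l = 0 from rfl, zero_add]
          exact hi
    · cases xb
      · cases q' <;> try exact ht.elim
        · -- l ⊢ s
          rw [show tL St.l (inr false) St.s = 0 from rfl, zero_add]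
          exact hi.2
      · cases q' <;> exact ht.elim
  | z =>
    have hp' : i' = i + 1 := by simpa [tA] using hp
    have hr' : readAt w i = some x := hr
    subst hp'
    rcases x with xc | xb
    · have hib := readAt_inl_bounds hr'
      cases xc
      · cases q' <;> try exact ht.elim
        · -- z a z
          obtain ⟨g, hg, hA, hHg, hIt⟩ := hi
          rw [show tL St.z (inl AHash.a) St.z = 0 from rfl, zero_add]
          exact ⟨g, by omega, Ablk_ext hr' hA, hHg, hIt⟩
      · cases q' <;> try exact ht.elim
        · -- z # t
          rw [show tL St.z (inl AHash.hash) St.t = 0 from rfl, zero_add]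
          exact ⟨i, le_rfl, Ablk_vac (by omega), hr', hi⟩
    · cases xb <;> cases q' <;> exact ht.elim
  | t =>
    have hp' : i' = i + 1 := by simpa [tA] using hp
    have hr' : readAt w i = some x := hr
    subst hp'
    rcases x with xc | xb
    · have hib := readAt_inl_bounds hr'
      cases xc
      · cases q' <;> try exact ht.elim
        · -- t a t
          obtain ⟨h, hh, hHh, hA2, hA3, hv⟩ := hi
          refine ⟨h, by omega, hHh, Ablk_ext hr' hA2, hA3, ?_⟩
          rw [hv]
          funext idx; fin_cases idx <;> simp [tL, Matrix.vecHead, Matrix.vecTail] <;> push_cast <;> ring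
      · cases q' <;> try exact ht.elim
        · -- t # u
          obtain ⟨-, hle, hA, hv⟩ := hi
          refine ⟨i, le_rfl, hr', Ablk_vac (by omega), hA, ?_⟩
          rw [hv]
          funext idx; fin_cases idx <;> simp [tL, Matrix.vecHead, Matrix.vecTail] <;> push_cast <;> ring
    · cases xb <;> cases q' <;> exact ht.elim
  | u =>
    have hp' : i' = i + 1 := by simpa [tA] using hp
    have hr' : readAt w i = some x := hr
    subst hp'
    rcases x with xc | xb
    · have hib := readAt_inl_bounds hr'
      cases xc
      · cases q' <;> try exact ht.elim
        · -- u a u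
          obtain ⟨-, hle, hA, hv⟩ := hi
          refine ⟨hib.1, by omega, Ablk_ext hr' hA, ?_⟩
          rw [hv]
          funext idx; fin_cases idx <;> simp [tL, Matrix.vecHead, Matrix.vecTail] <;> push_cast <;> ring
      · cases q' <;> exact ht.elim
    · cases xb
      · cases q' <;> exact ht.elim
      · cases q' <;> try exact ht.elim
        · -- u ⊣ f
          have hiL : i = w.length + 1 := readAt_eq_inr_true.1 hr'
          subst hiL
          refine ⟨by omega, le_rfl, Ablk_vac (by omega), ?_⟩
          rw [hi.2]
          funext idx; fin_cases idx <;> simp [tL, Matrix.vecHead, Matrix.vecTail]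
  | f =>
    rcases x with xc | xb
    · cases xc <;> cases q' <;> exact ht.elim
    · cases xb <;> cases q' <;> exact ht.elim
lemma inv_of_run {w : List AHash} : ∀ ρ : List (St × ℕ), ρ.Chain' (tA.step w) →
    ρ.getLast? = some (St.f, w.length + 2) → ∀ c, ρ.head? = some c →
    SInv w c (runVal tA tL w ρ) := by
  intro ρ
  induction ρ with
  | nil => intro _ _ c hc; simp at hc
  | cons c0 rest ih =>
    intro hch hlast c hc
    have hc0 : c = c0 := by simpa using hc.symm
    subst hc0
    cases rest with
    | nil =>
      have : c = (St.f, w.length + 2) := by simpa using hlast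
      subst this
      exact ⟨rfl, by simp [runVal]⟩
    | cons c1 rest' =>
      rw [List.Chain', List.isChain_cons_cons] at hch
      have hiv := ih hch.2 (by simpa using hlast) c1 rfl
      have hrv : runVal tA tL w (c :: c1 :: rest') =
          stepWeight tA tL w (c, c1) + runVal tA tL w (c1 :: rest') := by
        unfold runVal
        rw [List.tail_cons, List.zip_cons_cons, List.map_cons, List.sum_cons]
        exact rfl
      rw [hrv]
      exact inv_step hch.1 hiv

lemma backward {w : List AHash} (hw : w ∈ paLang tA tL {v | v = 0}) :
    ∃ n m : ℕ, w = tgt n m (n * m) := by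
  obtain ⟨ρ, ⟨⟨hne, hch⟩, ⟨q0, hq0, hhd⟩, ⟨qf, hqf, hlast⟩⟩, hval⟩ := hw
  have hq0s : q0 = St.s := hq0
  have hqff : qf = St.f := hqf
  subst hq0s; subst hqff
  have hiv := inv_of_run ρ hch hlast _ hhd
  have hval0 : runVal tA tL w ρ = 0 := hval
  rw [hval0] at hiv
  obtain ⟨-, g, h, p, hgh, hHg, hHh, hA1, hA2, hA3, hv⟩ := hiv
  have hgb := readAt_inl_bounds hHg
  have hhb := readAt_inl_bounds hHh
  have e0 : (0 : ℤ) = (p:ℤ) * ((g:ℤ) - 1) - ((w.length:ℤ) - h) := by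
    have := congrFun hv 0; simpa using this
  have e1 : (0 : ℤ) = (p:ℤ) - ((h:ℤ) - g - 1) := by
    have := congrFun hv 1; simpa [Matrix.vecHead, Matrix.vecTail] using this
  set n := g - 1 with hn
  set m := h - g - 1 with hm
  set k := w.length - h with hk
  have hpm : p = m := by omega
  have hkz : (k:ℤ) = (p:ℤ) * ((g:ℤ) - 1) := by push_cast; omega
  have hknm : k = n * m := by
    have : (k:ℤ) = (m:ℤ) * (n:ℤ) := by
      rw [hkz, hpm]
      congr 1
      push_cast
      omega
    have : (k:ℤ) = ((n * m : ℕ) : ℤ) := by rw [this]; push_cast; ring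
    exact_mod_cast this
  refine ⟨n, m, ?_⟩
  rw [← hknm]
  apply readAt_ext
  intro x
  have hgn : g = n + 1 := by omega
  have hhn : h = n + m + 2 := by omega
  have hLn : w.length = n + m + k + 2 := by omega
  rcases (by omega : x = 0 ∨ (1 ≤ x ∧ x ≤ n) ∨ x = n + 1 ∨ (n + 2 ≤ x ∧ x ≤ n + m + 1) ∨
      x = n + m + 2 ∨ (n + m + 3 ≤ x ∧ x ≤ n + m + k + 2) ∨ x = n + m + k + 3 ∨
      n + m + k + 3 < x) with
    hx | hx | hx | hx | hx | hx | hx | hx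
  · rw [hx, readAt_zero, readAt_zero]
  · rw [hA1 x (by omega) (by omega), readAt_tgt_a n m k hx.1 (Or.inl hx.2)]
  · rw [hx]
    rw [show readAt w (n+1) = some (inl AHash.hash) from hgn ▸ hHg, readAt_tgt_h1]
  · rw [hA2 x (by omega) (by omega), readAt_tgt_a n m k (by omega) (Or.inr (Or.inl hx))]
  · rw [hx]
    rw [show readAt w (n+m+2) = some (inl AHash.hash) from hhn ▸ hHh, readAt_tgt_h2]
  · rw [hA3 x (by omega) (by omega), readAt_tgt_a n m k (by omega) (Or.inr (Or.inr hx))]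
  · have e1 : readAt w x = some (inr true) := by
      rw [show x = w.length + 1 by omega]; exact readAt_endR w
    have e2 : readAt (tgt n m k) x = some (inr true) := by
      rw [show x = (tgt n m k).length + 1 by rw [tgt_length]; omega]; exact readAt_endR _
    rw [e1, e2]
  · rw [readAt_big w (by omega), readAt_big _ (by rw [tgt_length]; omega)]

/-- The language { a^n # a^m # a^{n·m} } is accepted by a
(non-deterministic) two-way Parikh automaton of dimension 2 with semi-linear
constraint {(0,0)}. -/
theorem mult_language_accepted_by_2PA :
    ∃ (Q : Type) (_ : Fintype Q) (A : TwoWayFA AHash Q)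
      (lam : Q → (AHash ⊕ Bool) → Q → (Fin 2 → ℤ)),
        paLang A lam {v | v = 0} =
          {w | ∃ n m : ℕ, w = List.replicate n AHash.a ++ AHash.hash ::
            (List.replicate m AHash.a ++ AHash.hash :: List.replicate (n * m) AHash.a)} := by
  refine ⟨St, inferInstance, tA, tL, ?_⟩
  ext w
  constructor
  · intro hw
    obtain ⟨n, m, rfl⟩ := backward hw
    exact ⟨n, m, rfl⟩
  · rintro ⟨n, m, rfl⟩
    exact forward n m
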